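/- Every ε-hermitian matrix over a division ring D with involution * is congruent to a direct sum of 1x1 blocks [a] with a ∈ S_ε(D) and 2x2 blocks [[0,b],[εb*,0]] with b ∈ D. Moreover, if ε ≠ -1 or *|_D ≠ id, every matrix of the form [[0,b],[εb*,0]] is congruent to a diagonal matrix. -/

import Mathlib

open Matrix

/-- An involution on a ring: an additive, anti-multiplicative map of order at most 2. -/
def IsInvolution {R : Type*} [Ring R] (τ : R → R) : Prop :=
  (∀ a b : R, τ (a + b) = τ a + τ b) ∧ (∀ a b : R, τ (a * b) = τ b * τ a) ∧
    (∀ a : R, τ (τ a) = a)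

/-- The conjugate-transpose involution on `Mₙ(D)` induced by an involution `σ` on `D`. -/
def matStar {D : Type*} [Ring D] {n : ℕ} (σ : D → D)
    (A : Matrix (Fin n) (Fin n) D) : Matrix (Fin n) (Fin n) D :=
  (Aᵀ).map σ

/-- `B` is (up to simultaneous permutation) a direct sum of 1×1 blocks `[a]` with
`ε σ(a) = a` and 2×2 blocks `[[0, b], [ε σ(b), 0]]`: there is an involutive pairing
`p` of the indices so that `B` vanishes outside the blocks, the 1×1 blocks are
`ε`-hermitian, and the 2×2 blocks have the stated form. -/
def IsBlockDiagForm {D : Type*} [Ring D] {n : ℕ} (σ : D → D) (ε : D)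
    (B : Matrix (Fin n) (Fin n) D) : Prop :=
  ∃ p : Fin n → Fin n, (∀ i, p (p i) = i) ∧
    (∀ i j, j ≠ i → j ≠ p i → B i j = 0) ∧
    (∀ i, p i = i → ε * σ (B i i) = B i i) ∧
    (∀ i, p i ≠ i → B i i = 0 ∧ B (p i) i = ε * σ (B i (p i)))

set_option linter.unusedSectionVars false

namespace Stmt6Aux

variable {D : Type*} [DivisionRing D]

variable {σ : D → D} (hσ : IsInvolution σ) {ε : D}

section sigma
include hσ

lemma s_add (a b : D) : σ (a + b) = σ a + σ b := hσ.1 a b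
lemma s_mul (a b : D) : σ (a * b) = σ b * σ a := hσ.2.1 a b
lemma s_s (a : D) : σ (σ a) = a := hσ.2.2 a
lemma s_inj : Function.Injective σ := Function.LeftInverse.injective hσ.2.2
lemma s_zero : σ 0 = 0 := by
  have h := hσ.1 0 0
  rw [add_zero] at h
  exact left_eq_add.mp h
lemma s_one : σ 1 = 1 := by
  have h1 : σ (1 * 1) = σ 1 * σ 1 := hσ.2.1 1 1
  rw [one_mul] at h1
  have h0 : σ 1 ≠ 0 := fun hc => by
    have := hσ.2.2 1; rw [hc, s_zero hσ] at this; exact one_ne_zero this.symm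
  exact (mul_left_cancel₀ h0 (by rw [mul_one, ← h1])).symm
lemma s_neg (a : D) : σ (-a) = - σ a := by
  have h := hσ.1 a (-a)
  rw [add_neg_cancel, s_zero hσ] at h
  exact (neg_eq_of_add_eq_zero_right h.symm).symm
lemma s_ne_zero {a : D} (h : a ≠ 0) : σ a ≠ 0 := by
  intro hc; exact h (by rw [← s_s hσ a, hc, s_zero hσ])
lemma s_inv (a : D) : σ a⁻¹ = (σ a)⁻¹ := by
  rcases eq_or_ne a 0 with rfl | h
  · rw [_root_.inv_zero, s_zero hσ, _root_.inv_zero]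
  · have h1 : σ a⁻¹ * σ a = 1 := by rw [← hσ.2.1, mul_inv_cancel₀ h, s_one hσ]
    exact eq_inv_of_mul_eq_one_left h1

/-- σ as an AddMonoidHom -/
def sHom : D →+ D where
  toFun := σ
  map_zero' := s_zero hσ
  map_add' := hσ.1

lemma s_sum {I : Type*} (s : Finset I) (f : I → D) :
    σ (∑ i ∈ s, f i) = ∑ i ∈ s, σ (f i) := map_sum (sHom hσ) f s

end sigma

section mat

variable (σ) in
/-- star for arbitrary index types -/
def mstar {I J : Type*} (B : Matrix I J D) : Matrix J I D := (Bᵀ).map σ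

variable (σ ε) in
/-- entrywise hermitian -/
def Herm {I : Type*} (B : Matrix I I D) : Prop := ∀ i j, ε * σ (B j i) = B i j

variable (σ ε) in
/-- block diagonal form, general index -/
def BDF {I : Type*} (B : Matrix I I D) : Prop :=
  ∃ p : I → I, (∀ i, p (p i) = i) ∧
    (∀ i j, j ≠ i → j ≠ p i → B i j = 0) ∧
    (∀ i, p i = i → ε * σ (B i i) = B i i) ∧
    (∀ i, p i ≠ i → B i i = 0 ∧ B (p i) i = ε * σ (B i (p i)))

@[simp] lemma mstar_apply {I J : Type*} (B : Matrix I J D) (i : J) (j : I) :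
    mstar σ B i j = σ (B j i) := rfl

include hσ in
lemma mstar_mul {I J K : Type*} [Fintype J] (X : Matrix I J D) (Y : Matrix J K D) :
    mstar σ (X * Y) = mstar σ Y * mstar σ X := by
  ext i j
  simp only [mstar_apply, Matrix.mul_apply, s_sum hσ, s_mul hσ]

include hσ in
lemma mstar_mstar {I J : Type*} (X : Matrix I J D) : mstar σ (mstar σ X) = X := by
  ext i j; simp [s_s hσ]

include hσ in
lemma mstar_one {I : Type*} [DecidableEq I] : mstar σ (1 : Matrix I I D) = 1 := by
  ext i j
  rcases eq_or_ne i j with rfl | h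
  · simp [Matrix.one_apply_eq, s_one hσ]
  · rw [mstar_apply, Matrix.one_apply_ne (Ne.symm h), Matrix.one_apply_ne h, s_zero hσ]

lemma mstar_submatrix {I J : Type*} (B : Matrix I I D) (e : J → I) :
    mstar σ (B.submatrix e e) = (mstar σ B).submatrix e e := rfl

lemma herm_of_smul {n : ℕ} {A : Matrix (Fin n) (Fin n) D} (h : ε • matStar σ A = A) :
    Herm σ ε A := by
  intro i j
  have := congrFun (congrFun h i) j
  simpa [matStar, Matrix.smul_apply] using this

include hσ in
lemma herm_congr {I J : Type*} [Fintype I] [Fintype J] {A : Matrix I I D}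
    (hA : Herm σ ε A) (hεc : ε ∈ Set.center D) (P : Matrix I J D) :
    Herm σ ε (mstar σ P * A * P) := by
  intro i j
  have expand : ∀ a b, (mstar σ P * A * P) a b =
      ∑ l, ∑ k, σ (P k a) * A k l * P l b := by
    intro a b
    rw [Matrix.mul_apply]
    refine Finset.sum_congr rfl fun l _ => ?_
    rw [Matrix.mul_apply, Finset.sum_mul]
    simp only [mstar_apply]
  rw [expand, expand, s_sum hσ, Finset.mul_sum]
  conv_rhs => rw [Finset.sum_comm]
  refine Finset.sum_congr rfl fun l _ => ?_
  rw [s_sum hσ, Finset.mul_sum]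
  refine Finset.sum_congr rfl fun k _ => ?_
  rw [s_mul hσ, s_mul hσ, s_s hσ]
  rw [← mul_assoc, hεc.comm, mul_assoc, ← mul_assoc ε, hA l k, ← mul_assoc]

/-- permutation matrix: column j has a 1 in row e j -/
def permM (D : Type*) [DivisionRing D] {I : Type*} [DecidableEq I] (e : Equiv.Perm I) :
    Matrix I I D :=
  Matrix.of fun i j => if e j = i then 1 else 0

lemma mul_permM {I J : Type*} [Fintype I] [DecidableEq I] (A : Matrix J I D)
    (e : Equiv.Perm I) (i : J) (j : I) : (A * permM D e) i j = A i (e j) := by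
  simp [permM, Matrix.mul_apply]

lemma permM_mul {I J : Type*} [Fintype I] [DecidableEq I] (A : Matrix I J D)
    (e : Equiv.Perm I) (i : I) (j : J) : (permM D e * A) i j = A (e.symm i) j := by
  simp [permM, Matrix.mul_apply, Equiv.apply_eq_iff_eq_symm_apply]

include hσ in
lemma mstar_permM {I : Type*} [DecidableEq I] (e : Equiv.Perm I) :
    mstar σ (permM D e) = permM D e.symm := by
  ext i j
  simp only [mstar_apply, permM, Matrix.of_apply]
  rcases eq_or_ne (e.symm j) i with h | h
  · rw [if_pos h, if_pos (by rw [Equiv.apply_eq_iff_eq_symm_apply]; exact h.symm), s_one hσ]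
  · rw [if_neg h, if_neg (by rw [Equiv.apply_eq_iff_eq_symm_apply]; exact fun hc => h hc.symm),
      s_zero hσ]

lemma permM_permM {I : Type*} [Fintype I] [DecidableEq I] (e f : Equiv.Perm I) :
    (permM D e) * permM D f = permM D (e * f) := by
  ext i j
  rw [mul_permM]
  simp [permM, Equiv.apply_eq_iff_eq_symm_apply]

lemma permM_one {I : Type*} [Fintype I] [DecidableEq I] :
    (permM D (1 : Equiv.Perm I)) = 1 := by
  ext i j
  simp [permM, Matrix.one_apply, eq_comm]

lemma isUnit_of_inv {I : Type*} [Fintype I] [DecidableEq I] (P Q : Matrix I I D)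
    (h1 : P * Q = 1) (h2 : Q * P = 1) : IsUnit P := ⟨⟨P, Q, h1, h2⟩, rfl⟩

lemma isUnit_permM {I : Type*} [Fintype I] [DecidableEq I] (e : Equiv.Perm I) :
    IsUnit (permM D e) := by
  refine isUnit_of_inv _ (permM D e⁻¹) ?_ ?_ <;> rw [permM_permM] <;>
    simp [permM_one]

include hσ in
lemma conj_permM {I : Type*} [Fintype I] [DecidableEq I] (A : Matrix I I D)
    (e : Equiv.Perm I) : mstar σ (permM D e) * A * permM D e = A.submatrix e e := by
  ext i j
  rw [mul_permM, mstar_permM hσ, permM_mul]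
  simp

lemma isUnit_submatrix {I J : Type*} [Fintype I] [Fintype J] [DecidableEq I] [DecidableEq J]
    {P : Matrix I I D} (h : IsUnit P) (e : J ≃ I) : IsUnit (P.submatrix e e) := by
  obtain ⟨u, rfl⟩ := h
  refine isUnit_of_inv _ ((u⁻¹).val.submatrix e e) ?_ ?_ <;>
    rw [Matrix.submatrix_mul_equiv]
  · rw [Units.mul_inv, Matrix.submatrix_one_equiv]
  · rw [Units.inv_mul, Matrix.submatrix_one_equiv]

lemma isUnit_one_add_nilsq {I : Type*} [Fintype I] [DecidableEq I] {N : Matrix I I D}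
    (h : N * N = 0) : IsUnit (1 + N) := by
  have k1 : (1 + N) * (1 - N) = 1 - N * N := by noncomm_ring
  have k2 : (1 - N) * (1 + N) = 1 - N * N := by noncomm_ring
  rw [h, sub_zero] at k1 k2
  exact isUnit_of_inv _ (1 - N) k1 k2

lemma isUnit_fromBlocks_diag {I J : Type*} [Fintype I] [Fintype J] [DecidableEq I]
    [DecidableEq J] {A : Matrix I I D} {B : Matrix J J D} (hA : IsUnit A) (hB : IsUnit B) :
    IsUnit (Matrix.fromBlocks A 0 0 B) := by
  obtain ⟨u, rfl⟩ := hA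
  obtain ⟨v, rfl⟩ := hB
  refine isUnit_of_inv _ (Matrix.fromBlocks (u⁻¹).val 0 0 (v⁻¹).val)
    ?_ ?_ <;> rw [Matrix.fromBlocks_multiply] <;>
    simp only [Units.mul_inv, Units.inv_mul, Matrix.zero_mul, Matrix.mul_zero, add_zero,
      zero_add, Matrix.fromBlocks_one]

lemma bdf_submatrix {I J : Type*} {B : Matrix I I D} (h : BDF σ ε B) (e : J ≃ I) :
    BDF σ ε (B.submatrix e e) := by
  obtain ⟨p, h1, h2, h3, h4⟩ := h
  refine ⟨fun j => e.symm (p (e j)), fun i => ?_, fun i j hji hjp => ?_, fun i hi => ?_,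
    fun i hi => ?_⟩
  · show e.symm (p (e (e.symm (p (e i))))) = i
    rw [e.apply_symm_apply, h1, e.symm_apply_apply]
  · show B (e i) (e j) = 0
    refine h2 (e i) (e j) (e.injective.ne hji) (fun hc => hjp ?_)
    show j = e.symm (p (e i))
    rw [← hc, e.symm_apply_apply]
  · show ε * σ (B (e i) (e i)) = B (e i) (e i)
    refine h3 (e i) ?_
    have : e (e.symm (p (e i))) = e i := congrArg e hi
    rwa [e.apply_symm_apply] at this
  · have hne : p (e i) ≠ e i := fun hc => hi (by show e.symm (p (e i)) = i; rw [hc, e.symm_apply_apply])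
    obtain ⟨ha, hb⟩ := h4 (e i) hne
    refine ⟨ha, ?_⟩
    show B (e (e.symm (p (e i)))) (e i) = ε * σ (B (e i) (e (e.symm (p (e i)))))
    rwa [e.apply_symm_apply]

lemma bdf_fromBlocks {I J : Type*} {A : Matrix I I D} {B : Matrix J J D}
    (hA : BDF σ ε A) (hB : BDF σ ε B) : BDF σ ε (Matrix.fromBlocks A 0 0 B) := by
  obtain ⟨p, p1, p2, p3, p4⟩ := hA
  obtain ⟨q, q1, q2, q3, q4⟩ := hB
  refine ⟨Sum.map p q, ?_, ?_, ?_, ?_⟩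
  · rintro (i | i) <;> simp [p1, q1]
  · rintro (i | i) (j | j) hji hjp <;>
      simp only [Matrix.fromBlocks_apply₁₁, Matrix.fromBlocks_apply₁₂,
        Matrix.fromBlocks_apply₂₁, Matrix.fromBlocks_apply₂₂, Matrix.zero_apply]
    · exact p2 i j (by simpa using hji) (by simpa using hjp)
    · exact q2 i j (by simpa using hji) (by simpa using hjp)
  · rintro (i | i) hi <;> simp only [Matrix.fromBlocks_apply₁₁, Matrix.fromBlocks_apply₂₂]
    · exact p3 i (by simpa using hi)
    · exact q3 i (by simpa using hi)
  · rintro (i | i) hi <;>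
      simp only [Sum.map_inl, Sum.map_inr, Matrix.fromBlocks_apply₁₁, Matrix.fromBlocks_apply₂₂]
    · exact p4 i (by simpa using hi)
    · exact q4 i (by simpa using hi)

include hσ in
lemma mstar_add {I J : Type*} (X Y : Matrix I J D) :
    mstar σ (X + Y) = mstar σ X + mstar σ Y := by
  ext i j; simp [s_add hσ]

include hσ in
lemma mstar_zero {I J : Type*} : mstar σ (0 : Matrix I J D) = 0 := by
  ext i j; simp [s_zero hσ]

include hσ in
lemma mstar_fromBlocks {I J : Type*} (A : Matrix I I D) (B : Matrix I J D)
    (C : Matrix J I D) (E : Matrix J J D) :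
    mstar σ (Matrix.fromBlocks A B C E) =
      Matrix.fromBlocks (mstar σ A) (mstar σ C) (mstar σ B) (mstar σ E) := by
  ext (i | i) (j | j) <;> rfl

include hσ in
lemma bdf_zero {I : Type*} : BDF σ ε (0 : Matrix I I D) :=
  ⟨id, fun _ => rfl, fun _ _ _ _ => rfl, fun i _ => by simp [s_zero hσ],
    fun i hi => absurd rfl hi⟩

lemma bdf_one_of_herm {B : Matrix (Fin 1) (Fin 1) D} (h : Herm σ ε B) : BDF σ ε B := by
  refine ⟨id, fun _ => rfl, fun i j hji _ => absurd (Subsingleton.elim j i) hji,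
    fun i _ => ?_, fun i hi => absurd rfl hi⟩
  exact h i i

lemma bdf_two_of_herm {T : Matrix (Fin 2) (Fin 2) D} (hT : Herm σ ε T)
    (h00 : T 0 0 = 0) (h11 : T 1 1 = 0) : BDF σ ε T := by
  refine ⟨![1, 0], ?_, ?_, ?_, ?_⟩
  · intro i; fin_cases i <;> rfl
  · intro i j hji hjp
    exfalso
    fin_cases i <;> fin_cases j <;> simp_all
  · intro i hi
    exfalso
    fin_cases i <;> simp_all
  · intro i _
    fin_cases i
    · exact ⟨h00, (hT 1 0).symm⟩
    · exact ⟨h11, (hT 0 1).symm⟩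

lemma herm_submatrix {I J : Type*} {B : Matrix I I D} (h : Herm σ ε B) (f : J → I) :
    Herm σ ε (B.submatrix f f) := fun i j => h (f i) (f j)

include hσ in
/-- the gluing lemma -/
lemma glue {K L I : Type*} [Fintype K] [Fintype L] [Fintype I]
    [DecidableEq K] [DecidableEq L] [DecidableEq I]
    (e : K ⊕ L ≃ I) {B : Matrix I I D} (hB : Herm σ ε B)
    (hcross : ∀ (i : K) (j : L), B (e (Sum.inl i)) (e (Sum.inr j)) = 0)
    (hK : BDF σ ε (B.submatrix (fun i => e (Sum.inl i)) (fun i => e (Sum.inl i))))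
    (hrec : ∃ Q : Matrix L L D, IsUnit Q ∧
      BDF σ ε (mstar σ Q * B.submatrix (fun i => e (Sum.inr i)) (fun i => e (Sum.inr i)) * Q)) :
    ∃ P : Matrix I I D, IsUnit P ∧ BDF σ ε (mstar σ P * B * P) := by
  obtain ⟨Q, hQu, hQb⟩ := hrec
  set T := B.submatrix (fun i => e (Sum.inl i)) (fun i => e (Sum.inl i)) with hT
  set C := B.submatrix (fun i => e (Sum.inr i)) (fun i => e (Sum.inr i)) with hC
  have hBdec : B = (Matrix.fromBlocks T 0 0 C).submatrix ⇑e.symm ⇑e.symm := by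
    ext i j
    rw [Matrix.submatrix_apply]
    conv_lhs => rw [← e.apply_symm_apply i, ← e.apply_symm_apply j]
    rcases e.symm i with x | x <;> rcases e.symm j with y | y
    · rfl
    · exact hcross x y
    · rw [Matrix.fromBlocks_apply₂₁, Matrix.zero_apply, ← hB, hcross, s_zero hσ, mul_zero]
    · rfl
  refine ⟨(Matrix.fromBlocks 1 0 0 Q).submatrix ⇑e.symm ⇑e.symm,
    isUnit_submatrix (isUnit_fromBlocks_diag isUnit_one hQu) e.symm, ?_⟩
  have key : mstar σ ((Matrix.fromBlocks 1 0 0 Q).submatrix ⇑e.symm ⇑e.symm) * B *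
      (Matrix.fromBlocks 1 0 0 Q).submatrix ⇑e.symm ⇑e.symm
      = (Matrix.fromBlocks T 0 0 (mstar σ Q * C * Q)).submatrix ⇑e.symm ⇑e.symm := by
    rw [mstar_submatrix, mstar_fromBlocks hσ, mstar_one hσ, mstar_zero hσ]
    conv_lhs => rw [hBdec]
    rw [Matrix.submatrix_mul_equiv, Matrix.submatrix_mul_equiv, Matrix.fromBlocks_multiply,
      Matrix.fromBlocks_multiply]
    simp only [mstar_zero hσ, Matrix.mul_zero, Matrix.zero_mul, Matrix.mul_one,
      Matrix.one_mul, add_zero, zero_add]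
  rw [key]
  exact bdf_submatrix (bdf_fromBlocks hK hQb) e.symm

def rowMat {I : Type*} [DecidableEq I] (r : I) (v : I → D) : Matrix I I D :=
  Matrix.of fun k j => if k = r then v j else 0

def colMat {I : Type*} [DecidableEq I] (r : I) (w : I → D) : Matrix I I D :=
  Matrix.of fun i j => if j = r then w i else 0

lemma mul_rowMat {I : Type*} [Fintype I] [DecidableEq I] (X : Matrix I I D) (r : I)
    (v : I → D) (i j : I) : (X * rowMat r v) i j = X i r * v j := by
  simp [rowMat, Matrix.mul_apply]

lemma colMat_mul {I : Type*} [Fintype I] [DecidableEq I] (X : Matrix I I D) (r : I)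
    (w : I → D) (i j : I) : (colMat r w * X) i j = w i * X r j := by
  simp [colMat, Matrix.mul_apply]

include hσ in
lemma mstar_rowMat {I : Type*} [DecidableEq I] (r : I) (v : I → D) :
    mstar σ (rowMat r v) = colMat r (fun i => σ (v i)) := by
  ext i j
  simp only [mstar_apply, rowMat, colMat, Matrix.of_apply]
  split_ifs
  · rfl
  · exact s_zero hσ

lemma rowMat_mul_rowMat {I : Type*} [Fintype I] [DecidableEq I] (r r' : I) (v v' : I → D) :
    rowMat r v * rowMat r' v' = rowMat r (fun j => v r' * v' j) := by
  ext i j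
  rw [mul_rowMat]
  simp only [rowMat, Matrix.of_apply, ite_mul, zero_mul]

include hσ in
lemma clear1 {m : ℕ} {A : Matrix (Fin (m+1)) (Fin (m+1)) D}
    (ha : A 0 0 ≠ 0) :
    ∃ P : Matrix (Fin (m+1)) (Fin (m+1)) D, IsUnit P ∧
      ∀ j, j ≠ 0 → (mstar σ P * A * P) 0 j = 0 := by
  set c : Fin (m+1) → D := fun j => if j = 0 then 0 else -(A 0 0)⁻¹ * A 0 j with hc
  have hc0 : c 0 = 0 := by simp [hc]
  have hNN : rowMat (0 : Fin (m+1)) c * rowMat 0 c = 0 := by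
    rw [rowMat_mul_rowMat, hc0]
    ext i j
    simp [rowMat]
  refine ⟨1 + rowMat 0 c, isUnit_one_add_nilsq hNN, fun j hj => ?_⟩
  have hw0 : σ (c 0) = 0 := by rw [hc0, s_zero hσ]
  have hcj : c j = -(A 0 0)⁻¹ * A 0 j := by simp [hc, hj]
  rw [mstar_add hσ, mstar_one hσ, mstar_rowMat hσ]
  have expand : (1 + colMat (0 : Fin (m+1)) (fun i => σ (c i))) * A * (1 + rowMat 0 c)
      = A + colMat 0 (fun i => σ (c i)) * A +
        (A * rowMat 0 c + colMat 0 (fun i => σ (c i)) * A * rowMat 0 c) := by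
    noncomm_ring
  rw [expand]
  simp only [Matrix.add_apply, mul_rowMat, colMat_mul, hw0, zero_mul]
  rw [hcj, neg_mul, mul_neg, ← mul_assoc, mul_inv_cancel₀ ha, one_mul]
  simp

include hσ in
lemma clear2 {m : ℕ} {A : Matrix (Fin (m+2)) (Fin (m+2)) D}
    (h01 : A 0 1 ≠ 0) (h10 : A 1 0 ≠ 0)
    (h00 : A 0 0 = 0) (h11 : A 1 1 = 0) :
    ∃ P : Matrix (Fin (m+2)) (Fin (m+2)) D, IsUnit P ∧
      (∀ i j : Fin (m+2), (i : ℕ) < 2 → 2 ≤ (j : ℕ) → (mstar σ P * A * P) i j = 0) ∧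
      (mstar σ P * A * P) 0 0 = 0 ∧ (mstar σ P * A * P) 1 1 = 0 := by
  set c : Fin (m+2) → D := fun j => if (j : ℕ) < 2 then 0 else -(A 1 0)⁻¹ * A 1 j with hc
  set d : Fin (m+2) → D := fun j => if (j : ℕ) < 2 then 0 else -(A 0 1)⁻¹ * A 0 j with hd
  have hc0 : c 0 = 0 := by simp [hc]
  have hc1 : c 1 = 0 := by simp [hc]
  have hd0 : d 0 = 0 := by simp [hd]
  have hd1 : d 1 = 0 := by simp [hd]
  have hcj : ∀ j : Fin (m+2), 2 ≤ (j : ℕ) → c j = -(A 1 0)⁻¹ * A 1 j := by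
    intro j hj; rw [hc]; simp [Nat.not_lt.mpr hj]
  have hdj : ∀ j : Fin (m+2), 2 ≤ (j : ℕ) → d j = -(A 0 1)⁻¹ * A 0 j := by
    intro j hj; rw [hd]; simp [Nat.not_lt.mpr hj]
  have hNN : (rowMat (0 : Fin (m+2)) c + rowMat 1 d) * (rowMat 0 c + rowMat 1 d) = 0 := by
    rw [add_mul, mul_add, mul_add, rowMat_mul_rowMat, rowMat_mul_rowMat,
      rowMat_mul_rowMat, rowMat_mul_rowMat, hc0, hc1, hd0, hd1]
    ext i j
    simp [rowMat]
  refine ⟨1 + (rowMat 0 c + rowMat 1 d), isUnit_one_add_nilsq hNN, ?_⟩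
  have hw0 : σ (c 0) = 0 := by rw [hc0, s_zero hσ]
  have hw1 : σ (c 1) = 0 := by rw [hc1, s_zero hσ]
  have hv0 : σ (d 0) = 0 := by rw [hd0, s_zero hσ]
  have hv1 : σ (d 1) = 0 := by rw [hd1, s_zero hσ]
  rw [mstar_add hσ, mstar_one hσ, mstar_add hσ, mstar_rowMat hσ, mstar_rowMat hσ]
  set M := colMat (0 : Fin (m+2)) (fun i => σ (c i)) + colMat 1 (fun i => σ (d i)) with hM
  set N := rowMat (0 : Fin (m+2)) c + rowMat 1 d with hN
  have hMrow : ∀ (X : Matrix (Fin (m+2)) (Fin (m+2)) D) (i j : Fin (m+2)),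
      i = 0 ∨ i = 1 → (M * X) i j = 0 := by
    rintro X i j (rfl | rfl) <;> rw [hM, add_mul] <;>
      simp only [Matrix.add_apply, colMat_mul, hw0, hw1, hv0, hv1, zero_mul, add_zero, zero_add]
  have expand : (1 + M) * A * (1 + N) = A + M * A + (A * N + M * A * N) := by noncomm_ring
  have hentry : ∀ i j : Fin (m+2), i = 0 ∨ i = 1 →
      ((1 + M) * A * (1 + N)) i j = A i j + (A i 0 * c j + A i 1 * d j) := by
    intro i j hi
    rw [expand]
    simp only [hN, mul_add, Matrix.add_apply, mul_rowMat]
    rw [hMrow A i j hi, hMrow A i (0 : Fin (m+2)) hi, hMrow A i (1 : Fin (m+2)) hi]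
    simp
  refine ⟨?_, ?_, ?_⟩
  · intro i j hi hj
    have hi' : i = 0 ∨ i = 1 := by
      have h2 : (i : ℕ) = 0 ∨ (i : ℕ) = 1 := by omega
      rcases h2 with h | h
      · exact Or.inl (Fin.ext (by simp [h]))
      · exact Or.inr (Fin.ext (by simp [h]))
    rw [hentry i j hi']
    rcases hi' with rfl | rfl
    · rw [h00, zero_mul, hdj j hj, neg_mul, mul_neg, ← mul_assoc, mul_inv_cancel₀ h01, one_mul]
      simp
    · rw [h11, zero_mul, hcj j hj, neg_mul, mul_neg, ← mul_assoc, mul_inv_cancel₀ h10, one_mul]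
      simp
  · rw [hentry 0 0 (Or.inl rfl), hc0, hd0, mul_zero, mul_zero, h00]
    simp
  · rw [hentry 1 1 (Or.inr rfl), hc1, hd1, mul_zero, mul_zero, h11]
    simp

def e1 (m : ℕ) : Fin 1 ⊕ Fin m ≃ Fin (m + 1) where
  toFun := Sum.elim (fun _ => 0) Fin.succ
  invFun := fun i => Fin.cases (Sum.inl 0) Sum.inr i
  left_inv := by
    rintro (x | x)
    · simp [Subsingleton.elim (0 : Fin 1) x]
    · simp
  right_inv := by
    intro i
    induction i using Fin.cases <;> simp

def e2 (m : ℕ) : Fin 2 ⊕ Fin m ≃ Fin (m + 2) where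
  toFun := Sum.elim (fun i => ⟨i.val, by omega⟩) (fun j => ⟨j.val + 2, by omega⟩)
  invFun := fun i => if h : (i : ℕ) < 2 then Sum.inl ⟨i, h⟩ else Sum.inr ⟨i - 2, by omega⟩
  left_inv := by
    rintro (x | x)
    · simp [x.isLt]
    · have h : ¬ ((x : ℕ) + 2 < 2) := by omega
      simp only [Sum.elim_inr, h, dif_neg, not_false_iff]
      exact congrArg Sum.inr (Fin.ext (by simp))
  right_inv := by
    intro i
    by_cases h : (i : ℕ) < 2
    · simp [h]
    · simp only [h, dif_neg, not_false_iff, Sum.elim_inr]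
      exact Fin.ext (by simp; omega)

include hσ in
lemma congr_chain {n : ℕ} (A P₁ P₂ : Matrix (Fin n) (Fin n) D) :
    mstar σ (P₁ * P₂) * A * (P₁ * P₂) = mstar σ P₂ * (mstar σ P₁ * A * P₁) * P₂ := by
  rw [mstar_mul hσ]
  simp only [mul_assoc]

include hσ in
lemma main_ind (hεc : ε ∈ Set.center D) (hε : ε * σ ε = 1) :
    ∀ n : ℕ, ∀ A : Matrix (Fin n) (Fin n) D, Herm σ ε A →
      ∃ P : Matrix (Fin n) (Fin n) D, IsUnit P ∧ BDF σ ε (mstar σ P * A * P) := by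
  intro n
  induction n using Nat.strong_induction_on with
  | _ n IH =>
    intro A hA
    by_cases hA0 : A = 0
    · refine ⟨1, isUnit_one, ?_⟩
      rw [mstar_one hσ, one_mul, mul_one, hA0]
      exact bdf_zero hσ
    · have hex : ∃ r s, A r s ≠ 0 := by
        by_contra hc
        push_neg at hc
        exact hA0 (by ext i j; simpa using hc i j)
      obtain ⟨r, s, hrs⟩ := hex
      by_cases hdiag : ∃ i, A i i ≠ 0
      · -- case 1 : nonzero diagonal entry
        obtain ⟨i, hi⟩ := hdiag
        obtain ⟨m, rfl⟩ : ∃ m, n = m + 1 := ⟨n - 1, by have := r.pos; omega⟩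
        set e : Equiv.Perm (Fin (m+1)) := Equiv.swap 0 i with he
        set A₁ : Matrix (Fin (m+1)) (Fin (m+1)) D := A.submatrix e e with hA₁
        have hconj : mstar σ (permM D e) * A * permM D e = A₁ := conj_permM hσ A e
        have hA₁h : Herm σ ε A₁ := herm_submatrix hA e
        have hA₁00 : A₁ 0 0 ≠ 0 := by
          rw [hA₁]
          simpa [Matrix.submatrix_apply, he, Equiv.swap_apply_left] using hi
        obtain ⟨P₂, hP₂u, hP₂row⟩ := clear1 hσ hA₁00
        set B : Matrix (Fin (m+1)) (Fin (m+1)) D := mstar σ P₂ * A₁ * P₂ with hB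
        have hBh : Herm σ ε B := herm_congr hσ hA₁h hεc P₂
        obtain ⟨P₃, hP₃u, hP₃b⟩ := glue hσ (e1 m) hBh
          (fun i j => hP₂row _ (Fin.succ_ne_zero j))
          (bdf_one_of_herm (herm_submatrix hBh _))
          (IH m (by omega) _ (herm_submatrix hBh _))
        refine ⟨permM D e * P₂ * P₃, ((isUnit_permM e).mul hP₂u).mul hP₃u, ?_⟩
        have key : mstar σ (permM D e * P₂ * P₃) * A * (permM D e * P₂ * P₃)
            = mstar σ P₃ * B * P₃ := by
          rw [congr_chain hσ, congr_chain hσ, hconj, ← hB]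
        rw [key]
        exact hP₃b
      · -- case 2 : zero diagonal
        push_neg at hdiag
        have hrs_ne : r ≠ s := fun hc => hrs (by rw [hc]; exact hdiag s)
        obtain ⟨m, rfl⟩ : ∃ m, n = m + 2 := by
          refine ⟨n - 2, ?_⟩
          rcases n with _ | _ | n
          · exact r.elim0
          · exact absurd (Fin.ext (by omega) : r = s) hrs_ne
          · omega
        set e : Equiv.Perm (Fin (m+2)) :=
          (Equiv.swap 1 (Equiv.swap 0 r s)).trans (Equiv.swap 0 r) with he
        have he0 : e 0 = r := by
          rw [he]
          have h1 : (0 : Fin (m+2)) ≠ 1 := by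
            intro hc
            have := congrArg Fin.val hc
            simp at this
          have h2 : (0 : Fin (m+2)) ≠ Equiv.swap 0 r s := by
            intro hc
            rw [eq_comm, Equiv.swap_apply_eq_iff, Equiv.swap_apply_left] at hc
            exact hrs_ne hc.symm
          simp [Equiv.swap_apply_of_ne_of_ne h1 h2, Equiv.swap_apply_left]
        have he1 : e 1 = s := by
          rw [he]
          simp [Equiv.swap_apply_left, Equiv.swap_apply_self]
        set A₁ : Matrix (Fin (m+2)) (Fin (m+2)) D := A.submatrix e e with hA₁
        have hconj : mstar σ (permM D e) * A * permM D e = A₁ := conj_permM hσ A e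
        have hA₁h : Herm σ ε A₁ := herm_submatrix hA e
        have h01 : A₁ 0 1 ≠ 0 := by rw [hA₁]; simpa [Matrix.submatrix_apply, he0, he1] using hrs
        have hεne : ε ≠ 0 := left_ne_zero_of_mul_eq_one hε
        have h10 : A₁ 1 0 ≠ 0 := by
          rw [← hA₁h 1 0]
          intro hc
          rcases mul_eq_zero.mp hc with h | h
          · exact hεne h
          · exact h01 (by rw [← s_s hσ (A₁ 0 1), h, s_zero hσ])
        have h00 : A₁ 0 0 = 0 := by rw [hA₁]; simpa [Matrix.submatrix_apply, he0] using hdiag r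
        have h11 : A₁ 1 1 = 0 := by rw [hA₁]; simpa [Matrix.submatrix_apply, he1] using hdiag s
        obtain ⟨P₂, hP₂u, hP₂row, hP₂00, hP₂11⟩ := clear2 hσ h01 h10 h00 h11
        set B : Matrix (Fin (m+2)) (Fin (m+2)) D := mstar σ P₂ * A₁ * P₂ with hB
        have hBh : Herm σ ε B := herm_congr hσ hA₁h hεc P₂
        have hcross : ∀ (i : Fin 2) (j : Fin m), B (e2 m (Sum.inl i)) (e2 m (Sum.inr j)) = 0 := by
          intro i j
          exact hP₂row _ _ (by have := i.isLt; simp [e2]; omega) (by simp [e2])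
        have hTb : BDF σ ε (B.submatrix (fun i => e2 m (Sum.inl i)) (fun i => e2 m (Sum.inl i))) := by
          refine bdf_two_of_herm (herm_submatrix hBh _) ?_ ?_
          · have : e2 m (Sum.inl 0) = 0 := rfl
            simpa [Matrix.submatrix_apply, this] using hP₂00
          · have : e2 m (Sum.inl 1) = 1 := rfl
            simpa [Matrix.submatrix_apply, this] using hP₂11
        obtain ⟨P₃, hP₃u, hP₃b⟩ := glue hσ (e2 m) hBh hcross hTb
          (IH m (by omega) _ (herm_submatrix hBh _))
        refine ⟨permM D e * P₂ * P₃, ((isUnit_permM e).mul hP₂u).mul hP₃u, ?_⟩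
        have key : mstar σ (permM D e * P₂ * P₃) * A * (permM D e * P₂ * P₃)
            = mstar σ P₃ * B * P₃ := by
          rw [congr_chain hσ, congr_chain hσ, hconj, ← hB]
        rw [key]
        exact hP₃b

include hσ in
lemma exists_aniso (hεc : ε ∈ Set.center D) (hε : ε * σ ε = 1)
    (hΔ : ε ≠ -1 ∨ ∃ d : D, σ d ≠ d) : ∃ c : D, c + ε * σ c ≠ 0 := by
  by_contra hcon
  push_neg at hcon
  have hεneg : ε = -1 := by
    have h1 := hcon 1
    rw [s_one hσ, mul_one] at h1
    exact eq_neg_of_add_eq_zero_right h1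
  rcases hΔ with h | ⟨d, hd⟩
  · exact h hεneg
  · have h2 := hcon d
    rw [hεneg, neg_one_mul, add_neg_eq_zero] at h2
    exact hd h2.symm

include hσ in
lemma part2 (hεc : ε ∈ Set.center D) (hε : ε * σ ε = 1)
    (hΔ : ε ≠ -1 ∨ ∃ d : D, σ d ≠ d) (b : D) :
    ∃ P : Matrix (Fin 2) (Fin 2) D, IsUnit P ∧
      (mstar σ P * !![0, b; ε * σ b, 0] * P).IsDiag := by
  rcases eq_or_ne b 0 with rfl | hb
  · refine ⟨1, isUnit_one, ?_⟩
    rw [mstar_one hσ, one_mul, mul_one]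
    intro i j hij
    fin_cases i <;> fin_cases j <;> simp_all [s_zero hσ]
  · obtain ⟨c, ht⟩ := exists_aniso hσ hεc hε hΔ
    have hσb : σ b ≠ 0 := s_ne_zero hσ hb
    have hσεε : σ ε * ε = 1 := (hεc.comm (σ ε)).symm.trans hε
    set u : D := b⁻¹ * c with hu
    set v : D := -(b⁻¹ * (ε * σ c)) with hv
    have hvu : v - u ≠ 0 := by
      have : v - u = -(b⁻¹ * (c + ε * σ c)) := by
        rw [hv, hu, mul_add]
        abel
      rw [this, neg_ne_zero]
      exact mul_ne_zero (inv_ne_zero hb) ht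
    set w : D := (v - u)⁻¹ with hw
    set P : Matrix (Fin 2) (Fin 2) D := !![1, 1; u, v] with hP
    have hms : mstar σ P = !![1, σ u; 1, σ v] := by
      ext i j
      fin_cases i <;> fin_cases j <;> simp [hP, mstar_apply, s_one hσ]
    -- invertibility
    have h2 : (v - u) * w = 1 := mul_inv_cancel₀ hvu
    have h3 : w * (v - u) = 1 := inv_mul_cancel₀ hvu
    have h1 : (u - v) * w = -1 := by
      rw [← neg_sub v u, neg_mul, h2]
    have hPu : IsUnit P := by
      refine isUnit_of_inv P !![w * v, -w; 1 - w * v, w] ?_ ?_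
      · rw [hP, Matrix.mul_fin_two, Matrix.one_fin_two]
        have e10 : u * (w * v) + v * (1 - w * v) = 0 := by
          have e : u * (w * v) + v * (1 - w * v) = ((u - v) * w) * v + v := by noncomm_ring
          rw [e, h1]; noncomm_ring
        have e11 : u * -w + v * w = 1 := by
          have e : u * -w + v * w = (v - u) * w := by noncomm_ring
          rw [e, h2]
        rw [show (1:D) * (w * v) + 1 * (1 - w * v) = 1 by noncomm_ring,
          show (1:D) * -w + 1 * w = 0 by noncomm_ring, e10, e11]
      · rw [hP, Matrix.mul_fin_two, Matrix.one_fin_two]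
        have e00 : w * v * 1 + -w * u = 1 := by
          have e : w * v * 1 + -w * u = w * (v - u) := by noncomm_ring
          rw [e, h3]
        have e10 : (1 - w * v) * 1 + w * u = 0 := by
          have e : (1 - w * v) * 1 + w * u = 1 - w * (v - u) := by noncomm_ring
          rw [e, h3]; noncomm_ring
        rw [e00, e10, show w * v * 1 + -w * v = 0 by noncomm_ring,
          show (1 - w * v) * 1 + w * v = 1 by noncomm_ring]
    -- the two off-diagonal entries vanish
    have hσu : σ u = σ c * (σ b)⁻¹ := by rw [hu, s_mul hσ, s_inv hσ]
    have hσv : σ v = -(c * σ ε * (σ b)⁻¹) := by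
      rw [hv, s_neg hσ, s_mul hσ, s_mul hσ, s_s hσ, s_inv hσ, mul_assoc]
    have hkey : ∀ x : D, (σ b)⁻¹ * (ε * σ b) = ε := by
      intro _
      rw [hεc.comm (σ b), ← mul_assoc, inv_mul_cancel₀ hσb, one_mul]
    have claim1 : σ u * (ε * σ b) + b * v = 0 := by
      rw [hσu, mul_assoc, hkey 0, hv, mul_neg, ← mul_assoc, mul_inv_cancel₀ hb, one_mul,
        ← hεc.comm]
      exact add_neg_cancel _
    have claim2 : σ v * (ε * σ b) + b * u = 0 := by
      rw [hσv, hu, ← mul_assoc b, mul_inv_cancel₀ hb, one_mul, neg_mul, mul_assoc, mul_assoc,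
        hkey 0, ← mul_assoc, mul_assoc c, hσεε, mul_one]
      exact neg_add_cancel _
    refine ⟨P, hPu, ?_⟩
    have hprod : mstar σ P * !![0, b; ε * σ b, 0] * P =
        !![σ u * (ε * σ b), b; σ v * (ε * σ b), b] * P := by
      rw [hms, Matrix.mul_fin_two]
      rw [show (1:D) * 0 + σ u * (ε * σ b) = σ u * (ε * σ b) by noncomm_ring,
        show (1:D) * b + σ u * 0 = b by noncomm_ring,
        show (1:D) * 0 + σ v * (ε * σ b) = σ v * (ε * σ b) by noncomm_ring,
        show (1:D) * b + σ v * 0 = b by noncomm_ring]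
    rw [hprod, hP, Matrix.mul_fin_two]
    intro i j hij
    fin_cases i <;> fin_cases j
    · exact absurd rfl hij
    · show σ u * (ε * σ b) * 1 + b * v = 0
      rw [mul_one]
      exact claim1
    · show σ v * (ε * σ b) * 1 + b * u = 0
      rw [mul_one]
      exact claim2
    · exact absurd rfl hij

end mat

end Stmt6Aux

/-- Diagonalization theorem: every `ε`-hermitian matrix over a division ring `D` with
involution `σ` is congruent to a direct sum of 1×1 blocks `[a]`, `a ∈ S_ε(D)`, and 2×2
blocks `[[0,b],[ε σ(b),0]]`.  Moreover, if `ε ≠ -1` or `σ ≠ id`, every matrix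
`[[0,b],[ε σ(b),0]]` is congruent to a diagonal matrix. -/
theorem stmt_6 {D : Type*} [DivisionRing D]
    (σ : D → D) (hσ : IsInvolution σ) (ε : D)
    (hεcent : ε ∈ Set.center D) (hε : ε * σ ε = 1) :
    (∀ (n : ℕ) (A : Matrix (Fin n) (Fin n) D), ε • matStar σ A = A →
        ∃ P : Matrix (Fin n) (Fin n) D, IsUnit P ∧
          IsBlockDiagForm σ ε (matStar σ P * A * P)) ∧
    ((ε ≠ -1 ∨ ∃ d : D, σ d ≠ d) → ∀ b : D,
        ∃ P : Matrix (Fin 2) (Fin 2) D, IsUnit P ∧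
          (matStar σ P * !![0, b; ε * σ b, 0] * P).IsDiag) := by
  constructor
  · intro n A hA
    obtain ⟨P, hPu, hPb⟩ := Stmt6Aux.main_ind hσ hεcent hε n A (Stmt6Aux.herm_of_smul hA)
    exact ⟨P, hPu, hPb⟩
  · intro hΔ b
    obtain ⟨P, hPu, hPd⟩ := Stmt6Aux.part2 hσ hεcent hε hΔ b
    exact ⟨P, hPu, hPd⟩
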